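/- For every n ≥ 3, the hyperbolicity of the n-cycle graph C_n equals ⌊n/4⌋ − 1/2 if n ≡ 1 (mod 4) and equals ⌊n/4⌋ otherwise. Concretely, setting h(n) = 2⌊n/4⌋ − 1 if n ≡ 1 (mod 4) and h(n) = 2⌊n/4⌋ otherwise: every quadruple of vertices x, y, u, v of C_n satisfies d(x,y) + d(u,v) ≤ max(d(x,u) + d(y,v), d(x,v) + d(y,u)) + h(n), and some quadruple satisfies d(x,y) + d(u,v) = max(d(x,u) + d(y,v), d(x,v) + d(y,u)) + h(n). -/

import Mathlib

set_option maxHeartbeats 1000000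
set_option linter.unnecessarySeqFocus false

/-- Twice the hyperbolicity of the `n`-cycle: `2⌊n/4⌋ - 1` if `n ≡ 1 (mod 4)`,
and `2⌊n/4⌋` otherwise. -/
def cycleHypTwice (n : ℕ) : ℕ := if n % 4 = 1 then 2 * (n / 4) - 1 else 2 * (n / 4)

/-- Cyclic distance between positions `a` and `b` on a cycle of length `n`. -/
def Dfun (n a b : ℕ) : ℕ := min (max a b - min a b) (n - (max a b - min a b))

theorem Dsymm (n a b : ℕ) : Dfun n a b = Dfun n b a := by
  unfold Dfun; rw [max_comm, min_comm a b]

theorem Dle (n a b : ℕ) (h : a ≤ b) : Dfun n a b = min (b - a) (n - (b - a)) := by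
  unfold Dfun; rw [max_eq_right h, min_eq_left h]

theorem gap_core (n p q r s : ℕ) (hn : 3 ≤ n) (hsum : p + q + r + s = n) :
    (min p (q+r+s) + min r (p+q+s) ≤
      max (min (p+q) (r+s) + min (q+r) (p+s)) (min (p+q+r) s + min q (p+r+s)) +
      cycleHypTwice n) ∧
    (min (p+q) (r+s) + min (q+r) (p+s) ≤
      max (min p (q+r+s) + min r (p+q+s)) (min (p+q+r) s + min q (p+r+s)) +
      cycleHypTwice n) ∧
    (min (p+q+r) s + min q (p+r+s) ≤
      max (min p (q+r+s) + min r (p+q+s)) (min (p+q) (r+s) + min (q+r) (p+s)) +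
      cycleHypTwice n) := by
  unfold cycleHypTwice
  refine ⟨?_, ?_, ?_⟩ <;> split_ifs <;> omega

theorem sorted_all (n w x y z : ℕ) (hn : 3 ≤ n) (h1 : w ≤ x) (h2 : x ≤ y) (h3 : y ≤ z)
    (hz : z < n) :
    (Dfun n w x + Dfun n y z ≤
      max (Dfun n w y + Dfun n x z) (Dfun n w z + Dfun n x y) + cycleHypTwice n) ∧
    (Dfun n w y + Dfun n x z ≤
      max (Dfun n w x + Dfun n y z) (Dfun n w z + Dfun n x y) + cycleHypTwice n) ∧
    (Dfun n w z + Dfun n x y ≤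
      max (Dfun n w x + Dfun n y z) (Dfun n w y + Dfun n x z) + cycleHypTwice n) := by
  rw [Dle n w x h1, Dle n y z h3, Dle n w y (h1.trans h2), Dle n x z (h2.trans h3),
    Dle n w z ((h1.trans h2).trans h3), Dle n x y h2]
  set s := n - (z - w) with hs
  rw [show n - (x - w) = y - x + (z - y) + s by omega,
      show n - (z - y) = x - w + (y - x) + s by omega,
      show n - (y - w) = z - y + s by omega,
      show n - (z - x) = x - w + s by omega,
      show n - (y - x) = x - w + (z - y) + s by omega,
      show y - w = x - w + (y - x) by omega,
      show z - x = y - x + (z - y) by omega,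
      show z - w = x - w + (y - x) + (z - y) by omega]
  exact gap_core n (x - w) (y - x) (z - y) s hn (by omega)

theorem core (n a b c d : ℕ) (hn : 3 ≤ n) (ha : a < n) (hb : b < n) (hc : c < n) (hd : d < n) :
    Dfun n a b + Dfun n c d ≤
      max (Dfun n a c + Dfun n b d) (Dfun n a d + Dfun n b c) + cycleHypTwice n := by
  have key : ∀ a b c d : ℕ, b < n → d < n → a ≤ b → a ≤ c → a ≤ d → c ≤ d →
      Dfun n a b + Dfun n c d ≤
        max (Dfun n a c + Dfun n b d) (Dfun n a d + Dfun n b c) + cycleHypTwice n := by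
    intro a b c d hb hd h1 h2 h3 h4
    rcases Nat.le_total b c with h5 | h5
    · exact (sorted_all n a b c d hn h1 h5 h4 hd).1
    · rcases Nat.le_total b d with h6 | h6
      · have := (sorted_all n a c b d hn h2 h5 h6 hd).2.1
        rwa [Dsymm n c b] at this
      · have := (sorted_all n a c d b hn h2 h4 h6 hb).2.2
        rwa [Dsymm n d b, Dsymm n c b] at this
  have key2 : ∀ a b c d : ℕ, a < n → b < n → c < n → d < n → a ≤ b → c ≤ d →
      Dfun n a b + Dfun n c d ≤
        max (Dfun n a c + Dfun n b d) (Dfun n a d + Dfun n b c) + cycleHypTwice n := by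
    intro a b c d ha hb hc hd h1 h2
    rcases Nat.le_total a c with h | h
    · exact key a b c d hb hd h1 h (h.trans h2) h2
    · have := key c d a b hd hb h2 h (h.trans h1) h1
      rw [Dsymm n c a, Dsymm n d b, Dsymm n c b, Dsymm n d a, add_comm (Dfun n c d),
        add_comm (Dfun n b c)] at this
      exact this
  rcases Nat.le_total a b with h1 | h1 <;> rcases Nat.le_total c d with h2 | h2
  · exact key2 a b c d ha hb hc hd h1 h2
  · have := key2 a b d c ha hb hd hc h1 h2
    rwa [Dsymm n d c, max_comm] at this
  · have := key2 b a c d hb ha hc hd h1 h2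
    rwa [Dsymm n b a, add_comm (Dfun n b c), add_comm (Dfun n b d), max_comm] at this
  · have := key2 b a d c hb ha hd hc h1 h2
    rwa [Dsymm n b a, Dsymm n d c, add_comm (Dfun n b d), add_comm (Dfun n b c)] at this

theorem finSubVal {N : ℕ} (u v : Fin N) :
    (v - u).val = if u.val ≤ v.val then v.val - u.val else N - (u.val - v.val) := by
  have hN := u.pos
  have h1 := u.isLt
  have h2 := v.isLt
  rw [Fin.sub_def]
  show (N - u.val + v.val) % N = _
  split_ifs with h
  · rw [show N - u.val + v.val = (v.val - u.val) + N by omega, Nat.add_mod_right,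
      Nat.mod_eq_of_lt (by omega)]
  · rw [Nat.mod_eq_of_lt (by omega)]
    omega

theorem finMinSub {N : ℕ} (u v : Fin N) :
    min (v - u).val (u - v).val = Dfun N u.val v.val := by
  have h1 := u.isLt
  have h2 := v.isLt
  rw [finSubVal, finSubVal]
  unfold Dfun
  split_ifs <;> omega

theorem walk_exists (m : ℕ) : ∀ (k : ℕ) (u v : Fin (m+3)), (v - u).val = k →
    ∃ p : (SimpleGraph.cycleGraph (m+3)).Walk u v, p.length = k := by
  intro k
  induction k with
  | zero =>
    intro u v h
    have h0 : v - u = 0 := Fin.ext (by simpa using h)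
    have : v = u := sub_eq_zero.mp h0
    subst this
    exact ⟨SimpleGraph.Walk.nil, rfl⟩
  | succ k ih =>
    intro u v h
    have hne : ((u + 1) - u : Fin (m+3)) = 1 := add_sub_cancel_left u 1
    have hadj : (SimpleGraph.cycleGraph (m+3)).Adj u (u+1) := by
      rw [SimpleGraph.cycleGraph_adj']
      right
      rw [hne, Fin.val_one]
    have hlt : k + 1 < m + 3 := by rw [← h]; exact (v - u).isLt
    have hk : ((v - (u+1)) : Fin (m+3)).val = k := by
      have e : v - (u+1) = (v - u) - 1 := (sub_sub v u 1).symm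
      rw [e, Fin.sub_def]
      show (m + 3 - ((1 : Fin (m+3)).val) + (v - u).val) % (m + 3) = k
      rw [Fin.val_one, h, show m + 3 - 1 + (k + 1) = k + (m + 3) by omega,
        Nat.add_mod_right, Nat.mod_eq_of_lt (by omega)]
    obtain ⟨p, hp⟩ := ih (u+1) v hk
    exact ⟨SimpleGraph.Walk.cons hadj p, by simp [hp]⟩

theorem walk_lb (m : ℕ) (u v : Fin (m+3)) (p : (SimpleGraph.cycleGraph (m+3)).Walk u v) :
    min (v - u).val (u - v).val ≤ p.length := by
  induction p with
  | nil => simp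
  | @cons u w v h q ih =>
    rw [SimpleGraph.cycleGraph_adj'] at h
    rw [SimpleGraph.Walk.length_cons]
    simp only [finSubVal] at h ih ⊢
    have h1 := u.isLt
    have h2 := w.isLt
    have h3 := v.isLt
    split_ifs at h ih ⊢ <;> omega

theorem dist_formula (m : ℕ) (u v : Fin (m+3)) :
    (SimpleGraph.cycleGraph (m+3)).dist u v = Dfun (m+3) u.val v.val := by
  rw [← finMinSub]
  apply le_antisymm
  · apply le_min
    · obtain ⟨p, hp⟩ := walk_exists m (v - u).val u v rfl
      exact hp ▸ SimpleGraph.dist_le p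
    · rw [SimpleGraph.dist_comm]
      obtain ⟨p, hp⟩ := walk_exists m (u - v).val v u rfl
      exact hp ▸ SimpleGraph.dist_le p
  · obtain ⟨p, hp⟩ := SimpleGraph.cycleGraph_connected.exists_walk_length_eq_dist u v
    exact hp ▸ walk_lb m u v p

/-- For `n ≥ 3`, the hyperbolicity of the `n`-cycle graph equals `⌊n/4⌋ - 1/2` when
`n ≡ 1 (mod 4)` and `⌊n/4⌋` otherwise: every quadruple of vertices satisfies the
four-point condition with defect `h(n) = cycleHypTwice n`, and some quadruple
attains this defect. -/
theorem cycleGraph_hyperbolicity (n : ℕ) (hn : 3 ≤ n) :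
    (∀ x y u v : Fin n,
      (SimpleGraph.cycleGraph n).dist x y + (SimpleGraph.cycleGraph n).dist u v ≤
        max ((SimpleGraph.cycleGraph n).dist x u + (SimpleGraph.cycleGraph n).dist y v)
          ((SimpleGraph.cycleGraph n).dist x v + (SimpleGraph.cycleGraph n).dist y u) +
          cycleHypTwice n) ∧
    (∃ x y u v : Fin n,
      (SimpleGraph.cycleGraph n).dist x y + (SimpleGraph.cycleGraph n).dist u v =
        max ((SimpleGraph.cycleGraph n).dist x u + (SimpleGraph.cycleGraph n).dist y v)
          ((SimpleGraph.cycleGraph n).dist x v + (SimpleGraph.cycleGraph n).dist y u) +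
          cycleHypTwice n) := by
  obtain ⟨m, rfl⟩ : ∃ m, n = m + 3 := ⟨n - 3, by omega⟩
  constructor
  · intro x y u v
    rw [dist_formula, dist_formula, dist_formula, dist_formula, dist_formula, dist_formula]
    exact core (m+3) x.val y.val u.val v.val (by omega) x.isLt y.isLt u.isLt v.isLt
  · have h4 : (m+3) % 4 = 0 ∨ (m+3) % 4 = 1 ∨ (m+3) % 4 = 2 ∨ (m+3) % 4 = 3 := by omega
    rcases h4 with h | h | h | h
    · refine ⟨⟨0, by omega⟩, ⟨2*((m+3)/4), by omega⟩, ⟨(m+3)/4, by omega⟩,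
        ⟨3*((m+3)/4), by omega⟩, ?_⟩
      rw [dist_formula, dist_formula, dist_formula, dist_formula, dist_formula, dist_formula]
      simp only [Fin.val_mk]
      unfold Dfun cycleHypTwice
      split_ifs <;> omega
    · refine ⟨⟨0, by omega⟩, ⟨2*((m+3)/4), by omega⟩, ⟨(m+3)/4, by omega⟩,
        ⟨3*((m+3)/4), by omega⟩, ?_⟩
      rw [dist_formula, dist_formula, dist_formula, dist_formula, dist_formula, dist_formula]
      simp only [Fin.val_mk]
      unfold Dfun cycleHypTwice
      split_ifs <;> omega
    · refine ⟨⟨0, by omega⟩, ⟨2*((m+3)/4)+1, by omega⟩, ⟨(m+3)/4, by omega⟩,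
        ⟨3*((m+3)/4)+1, by omega⟩, ?_⟩
      rw [dist_formula, dist_formula, dist_formula, dist_formula, dist_formula, dist_formula]
      simp only [Fin.val_mk]
      unfold Dfun cycleHypTwice
      split_ifs <;> omega
    · refine ⟨⟨0, by omega⟩, ⟨2*((m+3)/4)+1, by omega⟩, ⟨(m+3)/4, by omega⟩,
        ⟨3*((m+3)/4)+2, by omega⟩, ?_⟩
      rw [dist_formula, dist_formula, dist_formula, dist_formula, dist_formula, dist_formula]
      simp only [Fin.val_mk]
      unfold Dfun cycleHypTwice
      split_ifs <;> omega
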